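/- For every multi-index α ∈ ℕ^D and every θ ∈ ℝ^D, the higher-order derivative of the PQC cost function satisfies D^α C(θ) = 2^{−|α|₁} · Σ_{0 ≤ j ≤ α} (−1)^{|j|₁} · binom(α, j) · C( θ + (π/2)(α − 2j) ), where the sum runs over all multi-indices j with j_k ≤ α_k for all k, binom(α,j) := ∏_k binom(α_k, j_k), and α − 2j is interpreted componentwise as a vector in ℝ^D. -/

import Mathlib

open Matrix Real

/-- The partial derivative `∂_{θ_k} f`. -/
noncomputable def partialDeriv {D : ℕ} (k : Fin D) (f : (Fin D → ℝ) → ℝ) :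
    (Fin D → ℝ) → ℝ :=
  fun θ => fderiv ℝ f θ (Pi.single k 1)

/-- The higher-order partial derivative `D^α = ∂_{θ_1}^{α_1} ⋯ ∂_{θ_D}^{α_D}`
associated with a multi-index `α ∈ ℕ^D`. -/
noncomputable def multiDeriv {D : ℕ} (α : Fin D → ℕ) (f : (Fin D → ℝ) → ℝ) :
    (Fin D → ℝ) → ℝ :=
  ((List.finRange D).flatMap (fun k => List.replicate (α k) k)).foldr partialDeriv f


/-- The symmetric shift-difference operator with shift `c`. -/
noncomputable def shOp {E : Type*} [AddCommGroup E] (c : E) (f : E → ℝ) : E → ℝ :=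
  fun x => (f (x + c) - f (x - c)) / 2

lemma exp_invol {n : Type*} [Fintype n] [DecidableEq n] (V : Matrix n n ℂ) (hV : V * V = 1)
    (z : ℂ) :
    NormedSpace.exp (z • V) = Complex.cosh z • (1 : Matrix n n ℂ) + Complex.sinh z • V := by
  rw [NormedSpace.exp_eq_tsum (𝕂 := ℂ)]
  refine HasSum.tsum_eq ?_
  have hVpow_even : ∀ m : ℕ, V ^ (2 * m) = 1 := by
    intro m
    rw [pow_mul, show V ^ 2 = 1 by rw [sq, hV]]
    exact one_pow m
  have hVpow_odd : ∀ m : ℕ, V ^ (2 * m + 1) = V := by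
    intro m
    rw [pow_succ, hVpow_even m, one_mul]
  refine HasSum.even_add_odd ?_ ?_
  · have h := (Complex.hasSum_cosh z).smul_const (1 : Matrix n n ℂ)
    convert h using 2 with m
    · rfl
    rw [smul_pow, hVpow_even m, smul_smul]
    congr 1
    rw [div_eq_mul_inv, mul_comm]
  · have h := (Complex.hasSum_sinh z).smul_const V
    convert h using 2 with m
    · rfl
    rw [smul_pow, hVpow_odd m, smul_smul]
    congr 1
    rw [div_eq_mul_inv, mul_comm]

lemma exp_invol_cos {n : Type*} [Fintype n] [DecidableEq n] (V : Matrix n n ℂ) (hV : V * V = 1)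
    (w : ℂ) :
    NormedSpace.exp ((-Complex.I * w) • V)
      = Complex.cos w • (1 : Matrix n n ℂ) + (-Complex.I * Complex.sin w) • V := by
  rw [exp_invol V hV]
  rw [show -Complex.I * w = -(w * Complex.I) by ring, Complex.cosh_neg, Complex.sinh_neg,
    Complex.cosh_mul_I, Complex.sinh_mul_I]
  congr 1
  ring_nf

section comb

variable {E : Type*} [AddCommGroup E] [Module ℝ E]

lemma shOp_iterate (c : E) (m : ℕ) (f : E → ℝ) (x : E) :
    (shOp c)^[m] f x = (1 / 2 ^ m : ℝ) * ∑ j ∈ Finset.range (m + 1),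
      (-1 : ℝ) ^ j * (m.choose j : ℝ) * f (x + ((m : ℝ) - 2 * j) • c) := by
  induction m generalizing x with
  | zero => simp
  | succ m ih =>
    rw [Function.iterate_succ_apply']
    show ((shOp c)^[m] f (x + c) - (shOp c)^[m] f (x - c)) / 2 = _
    rw [ih, ih]
    set g : ℕ → ℝ := fun j => f (x + (((m : ℕ) + 1 : ℝ) - 2 * j) • c) with hg
    have hg1 : ∀ j : ℕ, x + c + ((m : ℝ) - 2 * j) • c = x + (((m : ℕ) + 1 : ℝ) - 2 * j) • c := by
      intro j
      rw [show ((m : ℕ) + 1 : ℝ) - 2 * j = ((m : ℝ) - 2 * j) + 1 by push_cast; ring, add_smul,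
        one_smul]
      abel
    have hg2 : ∀ j : ℕ, x - c + ((m : ℝ) - 2 * j) • c
        = x + (((m : ℕ) + 1 : ℝ) - 2 * ((j : ℕ) + 1 : ℝ)) • c := by
      intro j
      rw [show ((m : ℕ) + 1 : ℝ) - 2 * ((j : ℕ) + 1 : ℝ) = ((m : ℝ) - 2 * j) + (-1) by ring,
        add_smul, neg_one_smul]
      abel
    have key : (∑ j ∈ Finset.range (m + 1), (-1 : ℝ) ^ j * (m.choose j : ℝ) * g j)
        - (∑ j ∈ Finset.range (m + 1), (-1 : ℝ) ^ j * (m.choose j : ℝ) * g (j + 1))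
        = ∑ j ∈ Finset.range (m + 1 + 1), (-1 : ℝ) ^ j * ((m + 1).choose j : ℝ) * g j := by
      have hS1 : ∑ j ∈ Finset.range (m + 1 + 1), (-1 : ℝ) ^ j * (m.choose j : ℝ) * g j
          = ∑ j ∈ Finset.range (m + 1), (-1 : ℝ) ^ j * (m.choose j : ℝ) * g j := by
        rw [Finset.sum_range_succ, Nat.choose_succ_self]; simp
      have hshift : ∑ j ∈ Finset.range (m + 1), (-1 : ℝ) ^ (j + 1) * (m.choose (j + 1) : ℝ) * g (j + 1)
          = (∑ j ∈ Finset.range (m + 1), (-1 : ℝ) ^ j * (m.choose j : ℝ) * g j) - g 0 := by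
        have := Finset.sum_range_succ' (fun j => (-1 : ℝ) ^ j * (m.choose j : ℝ) * g j) (m + 1)
        rw [hS1] at this
        simp only [pow_zero, Nat.choose_zero_right, Nat.cast_one, one_mul] at this
        linarith [this]
      rw [Finset.sum_range_succ' (fun j => (-1 : ℝ) ^ j * ((m + 1).choose j : ℝ) * g j) (m + 1)]
      simp only [Nat.choose_succ_succ, Nat.cast_add, pow_succ]
      have expand : ∑ j ∈ Finset.range (m + 1),
          (-1 : ℝ) ^ j * -1 * (((m.choose j : ℝ)) + (m.choose (j + 1) : ℝ)) * g (j + 1)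
          = (∑ j ∈ Finset.range (m + 1), ((-1 : ℝ) ^ j * -1 * (m.choose j : ℝ) * g (j + 1)))
            + ∑ j ∈ Finset.range (m + 1), ((-1 : ℝ) ^ (j + 1) * (m.choose (j + 1) : ℝ) * g (j + 1)) := by
        rw [← Finset.sum_add_distrib]
        apply Finset.sum_congr rfl
        intro j _
        rw [pow_succ]
        ring
      rw [expand, hshift]
      simp only [pow_zero, Nat.choose_zero_right, Nat.cast_one, one_mul]
      have : ∑ j ∈ Finset.range (m + 1), (-1 : ℝ) ^ j * -1 * (m.choose j : ℝ) * g (j + 1)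
          = - ∑ j ∈ Finset.range (m + 1), (-1 : ℝ) ^ j * (m.choose j : ℝ) * g (j + 1) := by
        rw [← Finset.sum_neg_distrib]
        apply Finset.sum_congr rfl
        intro j _
        ring
      rw [this]
      ring
    calc ((1 / 2 ^ m : ℝ) * ∑ j ∈ Finset.range (m + 1),
            (-1 : ℝ) ^ j * (m.choose j : ℝ) * f (x + c + ((m : ℝ) - 2 * j) • c)
          - (1 / 2 ^ m : ℝ) * ∑ j ∈ Finset.range (m + 1),
            (-1 : ℝ) ^ j * (m.choose j : ℝ) * f (x - c + ((m : ℝ) - 2 * j) • c)) / 2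
        = (1 / 2 ^ (m + 1) : ℝ) * ((∑ j ∈ Finset.range (m + 1), (-1 : ℝ) ^ j * (m.choose j : ℝ) * g j)
            - ∑ j ∈ Finset.range (m + 1), (-1 : ℝ) ^ j * (m.choose j : ℝ) * g (j + 1)) := by
          have e1 : ∀ j ∈ Finset.range (m + 1), (-1 : ℝ) ^ j * (m.choose j : ℝ) * f (x + c + ((m : ℝ) - 2 * j) • c)
              = (-1 : ℝ) ^ j * (m.choose j : ℝ) * g j := by
            intro j _; rw [hg1 j]
          have e2 : ∀ j ∈ Finset.range (m + 1), (-1 : ℝ) ^ j * (m.choose j : ℝ) * f (x - c + ((m : ℝ) - 2 * j) • c)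
              = (-1 : ℝ) ^ j * (m.choose j : ℝ) * g (j + 1) := by
            intro j _; rw [hg2 j]; norm_num [hg]
          rw [Finset.sum_congr rfl e1, Finset.sum_congr rfl e2, pow_succ]
          ring
      _ = (1 / 2 ^ (m + 1) : ℝ) * ∑ j ∈ Finset.range (m + 1 + 1),
            (-1 : ℝ) ^ j * ((m + 1).choose j : ℝ) * g j := by rw [key]
      _ = _ := by
          apply congrArg
          apply Finset.sum_congr rfl
          intro j _
          norm_num [hg]

end comb

lemma foldr_shOp {D : ℕ} (α : Fin D → ℕ) (f : (Fin D → ℝ) → ℝ) :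
    ∀ l : List (Fin D), l.Nodup → ∀ θ : Fin D → ℝ,
      (l.foldr (fun k g => (shOp ((π / 2) • (Pi.single k 1 : Fin D → ℝ)))^[α k] g) f) θ =
        (1 / 2 ^ (l.map α).sum : ℝ) *
          ∑ j ∈ Fintype.piFinset (fun k => if k ∈ l then Finset.Iic (α k) else {0}),
            (-1 : ℝ) ^ (∑ k, j k) * (∏ k, ((α k).choose (j k) : ℝ)) *
              f (θ + (π / 2) • fun k => ((if k ∈ l then (α k : ℝ) else 0) - 2 * (j k : ℝ))) := by
  intro l
  induction l with
  | nil =>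
    intro _ θ
    have hP : Fintype.piFinset (fun k : Fin D => if k ∈ ([] : List (Fin D)) then Finset.Iic (α k) else {0})
        = {fun _ => 0} := by
      ext j
      simp [Fintype.mem_piFinset, funext_iff]
    rw [hP]
    have hθ : (θ + (π / 2) • fun _ : Fin D => ((0:ℝ) - 2 * ((0:ℕ):ℝ))) = θ := by
      funext k; simp
    simp only [Finset.sum_singleton, List.mem_cons, List.not_mem_nil, if_false]
    rw [hθ]
    simp
  | cons k₀ l ih =>
    intro hnd θ
    have hk₀ : k₀ ∉ l := (List.nodup_cons.mp hnd).1
    have hnd' : l.Nodup := (List.nodup_cons.mp hnd).2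
    rw [List.foldr_cons]
    rw [shOp_iterate]
    -- rewrite inner foldr values via ih
    have hih : ∀ y : Fin D → ℝ,
        (l.foldr (fun k g => (shOp ((π / 2) • (Pi.single k 1 : Fin D → ℝ)))^[α k] g) f) y
          = (1 / 2 ^ (l.map α).sum : ℝ) *
            ∑ j' ∈ Fintype.piFinset (fun k => if k ∈ l then Finset.Iic (α k) else {0}),
              (-1 : ℝ) ^ (∑ k, j' k) * (∏ k, ((α k).choose (j' k) : ℝ)) *
                f (y + (π / 2) • fun k => ((if k ∈ l then (α k : ℝ) else 0) - 2 * (j' k : ℝ))) :=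
      ih hnd'
    simp only [hih]
    -- now massage RHS into a double sum
    rw [show ((k₀ :: l).map α).sum = α k₀ + (l.map α).sum by simp]
    have hbij : ∑ j ∈ Fintype.piFinset (fun k => if k ∈ (k₀ :: l) then Finset.Iic (α k) else {0}),
        (-1 : ℝ) ^ (∑ k, j k) * (∏ k, ((α k).choose (j k) : ℝ)) *
          f (θ + (π / 2) • fun k => ((if k ∈ (k₀ :: l) then (α k : ℝ) else 0) - 2 * (j k : ℝ)))
        = ∑ p ∈ Finset.range (α k₀ + 1) ×ˢ
            Fintype.piFinset (fun k => if k ∈ l then Finset.Iic (α k) else {0}),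
            (-1 : ℝ) ^ (∑ k, Function.update p.2 k₀ p.1 k) *
              (∏ k, ((α k).choose (Function.update p.2 k₀ p.1 k) : ℝ)) *
              f (θ + (π / 2) • fun k => ((if k ∈ (k₀ :: l) then (α k : ℝ) else 0)
                - 2 * (Function.update p.2 k₀ p.1 k : ℝ))) := by
      have hupd : ∀ a : Fin D → ℕ, Function.update (Function.update a k₀ 0) k₀ (a k₀) = a := by
        intro a; funext k
        by_cases hk : k = k₀
        · subst hk; simp
        · simp [Function.update_of_ne hk]
      refine Finset.sum_nbij' (fun j => (j k₀, Function.update j k₀ 0))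
        (fun p => Function.update p.2 k₀ p.1) ?_ ?_ ?_ ?_ ?_
      · intro a ha
        simp only [Fintype.mem_piFinset] at ha
        simp only [Finset.mem_product, Finset.mem_range, Fintype.mem_piFinset]
        constructor
        · have := ha k₀
          simp only [List.mem_cons, true_or, if_true, Finset.mem_Iic] at this
          omega
        · intro k
          by_cases hk : k = k₀
          · subst hk; simp [hk₀]
          · rw [Function.update_of_ne hk]
            have := ha k
            simpa [List.mem_cons, hk] using this
      · intro p hp
        simp only [Finset.mem_product, Finset.mem_range, Fintype.mem_piFinset] at hp
        simp only [Fintype.mem_piFinset]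
        intro k
        by_cases hk : k = k₀
        · subst hk
          simp only [Function.update_self, List.mem_cons, true_or, if_true, Finset.mem_Iic]
          omega
        · rw [Function.update_of_ne hk]
          have := hp.2 k
          simpa [List.mem_cons, hk] using this
      · intro a _
        exact hupd a
      · intro p hp
        simp only [Finset.mem_product, Finset.mem_range, Fintype.mem_piFinset] at hp
        have h0 : p.2 k₀ = 0 := by
          have := hp.2 k₀
          simpa [hk₀] using this
        have h2 : Function.update (Function.update p.2 k₀ p.1) k₀ 0 = p.2 := by
          funext k
          by_cases hk : k = k₀
          · subst hk; simp [h0]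
          · simp [Function.update_of_ne hk]
        simp [h2]
      · intro a _
        rw [hupd a]
    rw [hbij, Finset.sum_product]
    simp only [Finset.mul_sum]
    apply Finset.sum_congr rfl
    intro j₀ hj₀
    apply Finset.sum_congr rfl
    intro j' hj'
    simp only [Fintype.mem_piFinset] at hj'
    have h0 : j' k₀ = 0 := by have := hj' k₀; simpa [hk₀] using this
    -- sum of update
    have hsum : (∑ k, Function.update j' k₀ j₀ k) = j₀ + ∑ k, j' k := by
      rw [Finset.sum_update_of_mem (Finset.mem_univ k₀)]
      rw [Finset.sdiff_singleton_eq_erase, Finset.sum_erase _ (by simpa using h0)]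
    have hprod : (∏ k, ((α k).choose (Function.update j' k₀ j₀ k) : ℝ))
        = ((α k₀).choose j₀ : ℝ) * ∏ k, ((α k).choose (j' k) : ℝ) := by
      have hcong : ∀ k : Fin D, ((α k).choose (Function.update j' k₀ j₀ k) : ℝ)
          = Function.update (fun k => ((α k).choose (j' k) : ℝ)) k₀ (((α k₀).choose j₀ : ℕ) : ℝ) k := by
        intro k
        by_cases hk : k = k₀
        · subst hk; simp
        · simp [Function.update_of_ne hk]
      rw [Finset.prod_congr rfl (fun k _ => hcong k)]
      rw [Finset.prod_update_of_mem (Finset.mem_univ k₀)]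
      rw [Finset.sdiff_singleton_eq_erase, Finset.prod_erase _ (by simp [h0])]
    -- argument equality
    have harg : θ + ((α k₀ : ℝ) - 2 * j₀) • ((π / 2) • (Pi.single k₀ 1 : Fin D → ℝ))
          + (π / 2) • (fun k => ((if k ∈ l then (α k : ℝ) else 0) - 2 * (j' k : ℝ)))
        = θ + (π / 2) • fun k => ((if k ∈ (k₀ :: l) then (α k : ℝ) else 0)
            - 2 * (Function.update j' k₀ j₀ k : ℝ)) := by
      rw [smul_comm ((α k₀ : ℝ) - 2 * j₀) ((π : ℝ)/2), add_assoc, ← smul_add]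
      congr 1
      congr 1
      funext k
      by_cases hk : k = k₀
      · subst hk
        simp [hk₀, h0, Pi.single_eq_same, List.mem_cons]
      · simp only [Pi.add_apply, Pi.smul_apply, Pi.single_eq_of_ne hk, smul_eq_mul, mul_zero,
          zero_add, Function.update_of_ne hk, List.mem_cons, hk, false_or]
    rw [hsum, hprod, ← harg]
    rw [pow_add, pow_add]
    push_cast
    ring

lemma foldr_flatMap' {A B C : Type*} (g : A → List B) (F : B → C → C) (init : C) (l : List A) :
    (l.flatMap g).foldr F init = l.foldr (fun a acc => (g a).foldr F acc) init := by
  induction l with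
  | nil => rfl
  | cons a l ih => rw [List.flatMap_cons, List.foldr_append, ih]; rfl

lemma foldr_replicate' {B C : Type*} (F : B → C → C) (b : B) (m : ℕ) (init : C) :
    (List.replicate m b).foldr F init = (F b)^[m] init := by
  induction m with
  | zero => rfl
  | succ m ih => rw [List.replicate_succ, List.foldr_cons, ih, Function.iterate_succ_apply']

lemma Iic_pi_eq {D : ℕ} (α : Fin D → ℕ) :
    Finset.Iic α = Fintype.piFinset (fun k => Finset.Iic (α k)) := by
  ext j
  simp [Fintype.mem_piFinset, Pi.le_def]

section good

variable {D : ℕ}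

def GoodPQC (f : (Fin D → ℝ) → ℝ) : Prop :=
  Differentiable ℝ f ∧ ∀ (k : Fin D) (θ : Fin D → ℝ),
    fderiv ℝ f θ (Pi.single k 1) =
      (f (θ + (π / 2) • (Pi.single k 1 : Fin D → ℝ))
        - f (θ - (π / 2) • (Pi.single k 1 : Fin D → ℝ))) / 2

lemma GoodPQC.shOp_closed {f : (Fin D → ℝ) → ℝ} (hf : GoodPQC f) (c : Fin D → ℝ) :
    GoodPQC (shOp c f) := by
  have h1 : Differentiable ℝ fun θ : Fin D → ℝ => f (θ + c) :=
    hf.1.comp (differentiable_id.add_const c)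
  have h2 : Differentiable ℝ fun θ : Fin D → ℝ => f (θ - c) :=
    hf.1.comp (differentiable_id.sub_const c)
  have hdiff : Differentiable ℝ (shOp c f) := by
    unfold shOp
    simp only [div_eq_mul_inv]
    exact (h1.sub h2).mul_const _
  have hfd : ∀ θ, HasFDerivAt (shOp c f)
      ((2⁻¹ : ℝ) • (fderiv ℝ f (θ + c) - fderiv ℝ f (θ - c))) θ := by
    intro θ
    have H1 : HasFDerivAt (fun θ : Fin D → ℝ => f (θ + c)) (fderiv ℝ f (θ + c)) θ := by
      have := (hf.1.differentiableAt (x := θ + c)).hasFDerivAt.comp θ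
        ((hasFDerivAt_id θ).add_const c)
      simpa [Function.comp_def] using this
    have H2 : HasFDerivAt (fun θ : Fin D → ℝ => f (θ - c)) (fderiv ℝ f (θ - c)) θ := by
      have := (hf.1.differentiableAt (x := θ - c)).hasFDerivAt.comp θ
        ((hasFDerivAt_id θ).sub_const c)
      simpa [Function.comp_def] using this
    have := ((H1.sub H2).const_smul (2⁻¹ : ℝ))
    have heq : (fun θ : Fin D → ℝ => (2⁻¹ : ℝ) • (f (θ + c) - f (θ - c))) = shOp c f := by
      funext x
      simp only [shOp, smul_eq_mul]
      ring
    rw [← heq]; exact this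
  constructor
  · exact hdiff
  · intro k θ
    rw [(hfd θ).fderiv]
    simp only [ContinuousLinearMap.coe_smul', Pi.smul_apply, ContinuousLinearMap.coe_sub',
      Pi.sub_apply, smul_eq_mul]
    rw [hf.2 k (θ + c), hf.2 k (θ - c)]
    have e1 : θ + c + (π / 2) • (Pi.single k 1 : Fin D → ℝ)
        = θ + (π / 2) • (Pi.single k 1 : Fin D → ℝ) + c := by abel
    have e2 : θ + c - (π / 2) • (Pi.single k 1 : Fin D → ℝ)
        = θ - (π / 2) • (Pi.single k 1 : Fin D → ℝ) + c := by abel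
    have e3 : θ - c + (π / 2) • (Pi.single k 1 : Fin D → ℝ)
        = θ + (π / 2) • (Pi.single k 1 : Fin D → ℝ) - c := by abel
    have e4 : θ - c - (π / 2) • (Pi.single k 1 : Fin D → ℝ)
        = θ - (π / 2) • (Pi.single k 1 : Fin D → ℝ) - c := by abel
    rw [e1, e2, e3, e4]
    show _ = ((f (θ + (π / 2) • (Pi.single k 1 : Fin D → ℝ) + c)
        - f (θ + (π / 2) • (Pi.single k 1 : Fin D → ℝ) - c)) / 2
      - (f (θ - (π / 2) • (Pi.single k 1 : Fin D → ℝ) + c)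
        - f (θ - (π / 2) • (Pi.single k 1 : Fin D → ℝ) - c)) / 2) / 2
    ring

lemma GoodPQC.partialDeriv_eq {f : (Fin D → ℝ) → ℝ} (hf : GoodPQC f) (k : Fin D) :
    partialDeriv k f = shOp ((π / 2) • (Pi.single k 1 : Fin D → ℝ)) f := by
  funext θ
  exact hf.2 k θ

lemma GoodPQC.foldr {f : (Fin D → ℝ) → ℝ} (hf : GoodPQC f) (L : List (Fin D)) :
    GoodPQC (L.foldr partialDeriv f) ∧
      L.foldr partialDeriv f
        = L.foldr (fun k g => shOp ((π / 2) • (Pi.single k 1 : Fin D → ℝ)) g) f := by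
  induction L with
  | nil => exact ⟨hf, rfl⟩
  | cons k L ih =>
    obtain ⟨hg, he⟩ := ih
    have heq : partialDeriv k (L.foldr partialDeriv f)
        = shOp ((π / 2) • (Pi.single k 1 : Fin D → ℝ)) (L.foldr partialDeriv f) :=
      hg.partialDeriv_eq k
    constructor
    · show GoodPQC (partialDeriv k (L.foldr partialDeriv f))
      rw [heq]
      exact hg.shOp_closed _
    · show partialDeriv k (L.foldr partialDeriv f) = _
      rw [heq, List.foldr_cons, he]

end good

lemma fderiv_single_hasDerivAt {D : ℕ} {f : (Fin D → ℝ) → ℝ} {θ : Fin D → ℝ}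
    (hf : DifferentiableAt ℝ f θ) (k : Fin D) :
    HasDerivAt (fun t => f (Function.update θ k t)) (fderiv ℝ f θ (Pi.single k 1)) (θ k) := by
  have hupd : ∀ t : ℝ, Function.update θ k t
      = θ + (t - θ k) • (Pi.single k 1 : Fin D → ℝ) := by
    intro t
    funext j
    by_cases hj : j = k
    · subst hj; simp
    · simp [Function.update_of_ne hj, Pi.single_eq_of_ne hj]
  have hre : (fun t => f (Function.update θ k t))
      = fun t => f (θ + (t - θ k) • (Pi.single k 1 : Fin D → ℝ)) :=
    funext fun t => congrArg f (hupd t)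
  rw [hre]
  have hinner : HasDerivAt (fun t : ℝ => θ + (t - θ k) • (Pi.single k 1 : Fin D → ℝ))
      (Pi.single k 1 : Fin D → ℝ) (θ k) := by
    have h1 : HasDerivAt (fun t : ℝ => t - θ k) 1 (θ k) := (hasDerivAt_id _).sub_const _
    have := (h1.smul_const (Pi.single k 1 : Fin D → ℝ)).const_add θ
    simpa using this
  have hfd : HasFDerivAt f (fderiv ℝ f θ)
      (θ + ((θ k) - θ k) • (Pi.single k 1 : Fin D → ℝ)) := by
    simpa using hf.hasFDerivAt
  have := hfd.comp_hasDerivAt (θ k) hinner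
  simpa [Function.comp_def] using this

lemma prod_entry_diff {n : Type*} [Fintype n] [DecidableEq n] {E : Type*}
    [NormedAddCommGroup E] [NormedSpace ℝ E] :
    ∀ l : List (E → Matrix n n ℂ),
      (∀ q : E → Matrix n n ℂ, q ∈ l → ∀ i j, Differentiable ℝ fun x => q x i j) →
      ∀ i j, Differentiable ℝ fun x => (l.map (fun q => q x)).prod i j := by
  intro l
  induction l with
  | nil => intro _ i j; simpa using differentiable_const ((1 : Matrix n n ℂ) i j)
  | cons g0 l ih =>
    intro h i j
    have h1 := h g0 (List.mem_cons_self)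
    have h2 := ih (fun q hq i j => h q (List.mem_cons_of_mem _ hq) i j)
    have heq : (fun x : E => (((g0 :: l).map (fun q : E → Matrix n n ℂ => q x)).prod) i j)
        = fun x : E => ∑ m, g0 x i m * ((l.map (fun q : E → Matrix n n ℂ => q x)).prod m j) := by
      funext x
      rw [List.map_cons, List.prod_cons, Matrix.mul_apply]
    rw [heq]
    apply Differentiable.fun_sum
    intro m _
    exact (h1 i m).mul (h2 m j)

lemma goodC {D : ℕ} {n : Type*} [Fintype n] [DecidableEq n]
    (W V : Fin D → Matrix n n ℂ) (hVinv : ∀ k, V k * V k = 1)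
    (H : Matrix n n ℂ) (e₀ : n → ℂ)
    (U : (Fin D → ℝ) → Matrix n n ℂ)
    (hU : ∀ θ, U θ = ((List.finRange D).reverse.map
        (fun k => NormedSpace.exp ((-Complex.I * ((θ k : ℂ) / 2)) • V k) * W k)).prod)
    (C : (Fin D → ℝ) → ℝ)
    (hC : ∀ θ, (C θ : ℂ) = star (U θ *ᵥ e₀) ⬝ᵥ (H *ᵥ (U θ *ᵥ e₀))) :
    GoodPQC C := by
  classical
  -- the closed form of each factor
  set factor : Fin D → (Fin D → ℝ) → Matrix n n ℂ := fun j θ =>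
    ((Real.cos (θ j / 2) : ℝ) : ℂ) • W j
      + ((Real.sin (θ j / 2) : ℝ) : ℂ) • ((-Complex.I) • (V j * W j)) with hfactor_def
  have hfactor_eq : ∀ (θ : Fin D → ℝ) (j : Fin D),
      NormedSpace.exp ((-Complex.I * ((θ j : ℂ) / 2)) • V j) * W j = factor j θ := by
    intro θ j
    rw [exp_invol_cos (V j) (hVinv j) ((θ j : ℂ) / 2)]
    rw [add_mul, Matrix.smul_mul, Matrix.smul_mul, Matrix.one_mul]
    simp only [hfactor_def]
    have hc : Complex.cos ((θ j : ℂ) / 2) = ((Real.cos (θ j / 2) : ℝ) : ℂ) := by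
      rw [Complex.ofReal_cos]; norm_num
    have hs : Complex.sin ((θ j : ℂ) / 2) = ((Real.sin (θ j / 2) : ℝ) : ℂ) := by
      rw [Complex.ofReal_sin]; norm_num
    rw [hc, hs]
    congr 1
    rw [smul_smul, mul_comm]
  have hfactor : ∀ θ, U θ = ((List.finRange D).reverse.map (fun j => factor j θ)).prod := by
    intro θ
    rw [hU θ]
    congr 1
    exact List.map_congr_left (fun j _ => hfactor_eq θ j)
  -- differentiability of the entries of the factors
  have hcosd : ∀ j : Fin D, Differentiable ℝ (fun θ : Fin D → ℝ => ((Real.cos (θ j / 2) : ℝ) : ℂ)) := by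
    intro j
    apply Complex.ofRealCLM.differentiable.comp
    apply Real.differentiable_cos.comp
    have : Differentiable ℝ (fun θ : Fin D → ℝ => θ j * (2⁻¹ : ℝ)) :=
      (ContinuousLinearMap.proj j : (Fin D → ℝ) →L[ℝ] ℝ).differentiable.mul_const _
    simpa [div_eq_mul_inv] using this
  have hsind : ∀ j : Fin D, Differentiable ℝ (fun θ : Fin D → ℝ => ((Real.sin (θ j / 2) : ℝ) : ℂ)) := by
    intro j
    apply Complex.ofRealCLM.differentiable.comp
    apply Real.differentiable_sin.comp
    have : Differentiable ℝ (fun θ : Fin D → ℝ => θ j * (2⁻¹ : ℝ)) :=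
      (ContinuousLinearMap.proj j : (Fin D → ℝ) →L[ℝ] ℝ).differentiable.mul_const _
    simpa [div_eq_mul_inv] using this
  have hfacd : ∀ (j : Fin D) (i i' : n), Differentiable ℝ fun θ => factor j θ i i' := by
    intro j i i'
    have heq : (fun θ => factor j θ i i')
        = fun θ => ((Real.cos (θ j / 2) : ℝ) : ℂ) * W j i i'
            + ((Real.sin (θ j / 2) : ℝ) : ℂ) * ((-Complex.I) • (V j * W j)) i i' := by
      funext θ
      rw [hfactor_def]
      simp [Matrix.add_apply, Matrix.smul_apply, smul_eq_mul]
    rw [heq]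
    exact ((hcosd j).mul_const _).add ((hsind j).mul_const _)
  have hUdiff : ∀ i j, Differentiable ℝ fun θ => U θ i j := by
    intro i j
    have hl : ∀ q : (Fin D → ℝ) → Matrix n n ℂ, q ∈ (List.finRange D).reverse.map factor →
        ∀ i j, Differentiable ℝ fun θ => q θ i j := by
      intro q hq
      rw [List.mem_map] at hq
      obtain ⟨a, -, rfl⟩ := hq
      exact hfacd a
    have hd := prod_entry_diff _ hl i j
    have heq : (fun θ => U θ i j)
        = fun θ : Fin D → ℝ => ((((List.finRange D).reverse.map factor).map
            (fun q : (Fin D → ℝ) → Matrix n n ℂ => q θ)).prod) i j := by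
      funext θ
      rw [hfactor θ, List.map_map]
      rfl
    rw [heq]
    exact hd
  -- ψ entries
  have hψd : ∀ i, Differentiable ℝ fun θ => (U θ *ᵥ e₀) i := by
    intro i
    have heq : (fun θ => (U θ *ᵥ e₀) i) = fun θ => ∑ m, U θ i m * e₀ m := by
      funext θ; rfl
    rw [heq]
    apply Differentiable.fun_sum
    intro m _
    exact (hUdiff i m).mul_const _
  have hCre : ∀ θ, C θ = (star (U θ *ᵥ e₀) ⬝ᵥ (H *ᵥ (U θ *ᵥ e₀))).re := by
    intro θ
    rw [← hC θ, Complex.ofReal_re]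
  have hXd : Differentiable ℝ fun θ => star (U θ *ᵥ e₀) ⬝ᵥ (H *ᵥ (U θ *ᵥ e₀)) := by
    have heq : (fun θ => star (U θ *ᵥ e₀) ⬝ᵥ (H *ᵥ (U θ *ᵥ e₀)))
        = fun θ => ∑ i, (starRingEnd ℂ) ((U θ *ᵥ e₀) i) * ∑ j, H i j * (U θ *ᵥ e₀) j := by
      funext θ
      simp [dotProduct, Matrix.mulVec, Pi.star_apply, RCLike.star_def]
    rw [heq]
    apply Differentiable.fun_sum
    intro i _
    apply Differentiable.mul
    · exact Complex.conjCLE.differentiable.comp (hψd i)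
    · apply Differentiable.fun_sum
      intro j _
      exact (hψd j).const_mul _
  have hCdiff : Differentiable ℝ C := by
    have heq : C = fun θ => (star (U θ *ᵥ e₀) ⬝ᵥ (H *ᵥ (U θ *ᵥ e₀))).re := funext hCre
    rw [heq]
    exact Complex.reCLM.differentiable.comp hXd
  -- per-coordinate trigonometric structure
  have htrig : ∀ (k : Fin D) (θ : Fin D → ℝ), ∃ a b e : ℝ, ∀ t : ℝ,
      C (Function.update θ k t) = a + b * Real.cos t + e * Real.sin t := by
    intro k θ
    -- the matrix-valued structure
    have main : ∀ l : List (Fin D), l.Nodup → k ∈ l → ∃ A B : Matrix n n ℂ, ∀ t : ℝ,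
        ((l.map (fun j => factor j (Function.update θ k t))).prod)
          = ((Real.cos (t / 2) : ℝ) : ℂ) • A + ((Real.sin (t / 2) : ℝ) : ℂ) • B := by
      intro l
      induction l with
      | nil => intro _ h; simp at h
      | cons j l ih =>
        intro hnd hmem
        by_cases hj : j = k
        · subst hj
          have hkl : j ∉ l := (List.nodup_cons.mp hnd).1
          have hconst : ∀ t, (l.map (fun j' => factor j' (Function.update θ j t))).prod
              = (l.map (fun j' => factor j' θ)).prod := by
            intro t
            congr 1
            apply List.map_congr_left
            intro j' hj'
            have hne : j' ≠ j := fun h => hkl (h ▸ hj')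
            simp only [hfactor_def]
            simp only [Function.update_of_ne hne]
          refine ⟨W j * (l.map (fun j' => factor j' θ)).prod,
            ((-Complex.I) • (V j * W j)) * (l.map (fun j' => factor j' θ)).prod, ?_⟩
          intro t
          rw [List.map_cons, List.prod_cons, hconst t]
          simp only [hfactor_def]
          simp only [Function.update_self]
          rw [add_mul, Matrix.smul_mul, Matrix.smul_mul]
        · have hmem' : k ∈ l := by
            rcases List.mem_cons.mp hmem with h | h
            · exact absurd h.symm hj
            · exact h
          obtain ⟨A, B, hAB⟩ := ih (List.nodup_cons.mp hnd).2 hmem'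
          refine ⟨factor j θ * A, factor j θ * B, ?_⟩
          intro t
          rw [List.map_cons, List.prod_cons, hAB t]
          have : factor j (Function.update θ k t) = factor j θ := by
            simp only [hfactor_def]
            simp only [Function.update_of_ne hj]
          rw [this, mul_add, mul_smul_comm, mul_smul_comm]
    obtain ⟨A, B, hAB⟩ := main ((List.finRange D).reverse)
      (List.nodup_reverse.mpr (List.nodup_finRange D))
      (List.mem_reverse.mpr (List.mem_finRange k))
    set u := A *ᵥ e₀ with hu
    set w := B *ᵥ e₀ with hw
    have hψt : ∀ t : ℝ, U (Function.update θ k t) *ᵥ e₀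
        = ((Real.cos (t / 2) : ℝ) : ℂ) • u + ((Real.sin (t / 2) : ℝ) : ℂ) • w := by
      intro t
      rw [hfactor, hAB t, Matrix.add_mulVec, Matrix.smul_mulVec, Matrix.smul_mulVec]
    set z1 := star u ⬝ᵥ (H *ᵥ u) with hz1
    set z2 := star u ⬝ᵥ (H *ᵥ w) + star w ⬝ᵥ (H *ᵥ u) with hz2
    set z3 := star w ⬝ᵥ (H *ᵥ w) with hz3
    have hq : ∀ t : ℝ, C (Function.update θ k t)
        = Real.cos (t / 2) ^ 2 * z1.re + (Real.cos (t / 2) * Real.sin (t / 2)) * z2.re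
          + Real.sin (t / 2) ^ 2 * z3.re := by
      intro t
      rw [hCre, hψt t]
      have expand : star (((Real.cos (t / 2) : ℝ) : ℂ) • u + ((Real.sin (t / 2) : ℝ) : ℂ) • w)
          ⬝ᵥ (H *ᵥ (((Real.cos (t / 2) : ℝ) : ℂ) • u + ((Real.sin (t / 2) : ℝ) : ℂ) • w))
          = ((Real.cos (t / 2) ^ 2 : ℝ) : ℂ) * z1 + ((Real.cos (t / 2) * Real.sin (t / 2) : ℝ) : ℂ) * z2
            + ((Real.sin (t / 2) ^ 2 : ℝ) : ℂ) * z3 := by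
        rw [hz1, hz2, hz3]
        simp only [star_add, star_smul, Matrix.mulVec_add, Matrix.mulVec_smul,
          add_dotProduct, dotProduct_add, smul_dotProduct,
          dotProduct_smul, smul_eq_mul, RCLike.star_def, Complex.conj_ofReal]
        push_cast
        ring
      rw [expand]
      simp only [Complex.add_re, Complex.re_ofReal_mul]
    refine ⟨z1.re / 2 + z3.re / 2, z1.re / 2 - z3.re / 2, z2.re / 2, ?_⟩
    intro t
    rw [hq t]
    have hcos2 : Real.cos (t / 2) ^ 2 = 1 / 2 + Real.cos t / 2 := by
      rw [Real.cos_sq, mul_div_cancel₀ t two_ne_zero]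
    have hsin2 : Real.sin (t / 2) ^ 2 = 1 / 2 - Real.cos t / 2 := by
      rw [Real.sin_sq, hcos2]; ring
    have hcs : Real.cos (t / 2) * Real.sin (t / 2) = Real.sin t / 2 := by
      have := Real.sin_two_mul (t / 2)
      rw [mul_div_cancel₀ t two_ne_zero] at this
      rw [this]; ring
    rw [hcos2, hsin2, hcs]
    ring
  -- conclude
  refine ⟨hCdiff, ?_⟩
  intro k θ
  obtain ⟨a, b, e, hab⟩ := htrig k θ
  have h1 : HasDerivAt (fun t => C (Function.update θ k t)) (fderiv ℝ C θ (Pi.single k 1)) (θ k) :=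
    fderiv_single_hasDerivAt (hCdiff θ) k
  have h2 : HasDerivAt (fun t => C (Function.update θ k t))
      (-(b * Real.sin (θ k)) + e * Real.cos (θ k)) (θ k) := by
    have heq : (fun t => C (Function.update θ k t))
        = fun t => a + b * Real.cos t + e * Real.sin t := funext hab
    rw [heq]
    have hc : HasDerivAt (fun t : ℝ => a + b * Real.cos t) (-(b * Real.sin (θ k))) (θ k) := by
      have := (Real.hasDerivAt_cos (θ k)).const_mul b
      simpa [mul_comm] using this.const_add a
    have hs : HasDerivAt (fun t : ℝ => e * Real.sin t) (e * Real.cos (θ k)) (θ k) :=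
      (Real.hasDerivAt_sin (θ k)).const_mul e
    exact hc.add hs
  have hderiv : fderiv ℝ C θ (Pi.single k 1) = -(b * Real.sin (θ k)) + e * Real.cos (θ k) :=
    h1.unique h2
  have hplus : θ + (π / 2) • (Pi.single k 1 : Fin D → ℝ) = Function.update θ k (θ k + π / 2) := by
    funext j
    by_cases hj : j = k
    · subst hj; simp
    · simp [Function.update_of_ne hj, Pi.single_eq_of_ne hj]
  have hminus : θ - (π / 2) • (Pi.single k 1 : Fin D → ℝ) = Function.update θ k (θ k - π / 2) := by
    funext j
    by_cases hj : j = k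
    · subst hj; simp
    · simp [Function.update_of_ne hj, Pi.single_eq_of_ne hj]
  rw [hderiv, hplus, hminus, hab, hab]
  simp only [Real.cos_add, Real.sin_add, Real.cos_sub, Real.sin_sub,
    Real.cos_pi_div_two, Real.sin_pi_div_two]
  ring

/-- For every multi-index `α ∈ ℕ^D` and every `θ ∈ ℝ^D`, the higher-order
derivative of the PQC cost function satisfies the higher-order parameter-shift rule
`D^α C(θ) = 2^{−|α|₁} Σ_{0 ≤ j ≤ α} (−1)^{|j|₁} binom(α,j) C(θ + (π/2)(α − 2j))`. -/
theorem stmt2 (N D : ℕ) (hN : 1 ≤ N) (hD : 1 ≤ D)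
    (W V : Fin D → Matrix (Fin (2 ^ N)) (Fin (2 ^ N)) ℂ)
    (hW : ∀ k, (W k)ᴴ * W k = 1 ∧ W k * (W k)ᴴ = 1)
    (hVherm : ∀ k, (V k)ᴴ = V k) (hVinv : ∀ k, V k * V k = 1)
    (H : Matrix (Fin (2 ^ N)) (Fin (2 ^ N)) ℂ) (hH : Hᴴ = H)
    (e₀ : Fin (2 ^ N) → ℂ) (he₀ : e₀ = fun i : Fin (2 ^ N) => if (i : ℕ) = 0 then (1 : ℂ) else 0)
    (U : (Fin D → ℝ) → Matrix (Fin (2 ^ N)) (Fin (2 ^ N)) ℂ)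
    (hU : ∀ θ, U θ = ((List.finRange D).reverse.map
        (fun k => NormedSpace.exp ((-Complex.I * ((θ k : ℂ) / 2)) • V k) * W k)).prod)
    (C : (Fin D → ℝ) → ℝ)
    (hC : ∀ θ, (C θ : ℂ) = star (U θ *ᵥ e₀) ⬝ᵥ (H *ᵥ (U θ *ᵥ e₀)))
    (α : Fin D → ℕ) (θ : Fin D → ℝ) :
    multiDeriv α C θ =
      (1 / 2 ^ (∑ k, α k) : ℝ) * ∑ j ∈ Finset.Iic α,
        (-1 : ℝ) ^ (∑ k, j k) * (∏ k, (α k).choose (j k)) *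
          C (θ + (π / 2) • fun k => ((α k : ℝ) - 2 * (j k : ℝ))) := by
  have hgood : GoodPQC C := goodC W V hVinv H e₀ U hU C hC
  have h1 : multiDeriv α C
      = ((List.finRange D).flatMap (fun k => List.replicate (α k) k)).foldr partialDeriv C := rfl
  have h2 := (hgood.foldr ((List.finRange D).flatMap (fun k => List.replicate (α k) k))).2
  have hstep : (fun (a : Fin D) (acc : (Fin D → ℝ) → ℝ) => (List.replicate (α a) a).foldr
        (fun k g => shOp ((π / 2) • (Pi.single k 1 : Fin D → ℝ)) g) acc)
      = fun a acc => (shOp ((π / 2) • (Pi.single a 1 : Fin D → ℝ)))^[α a] acc :=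
    funext fun a => funext fun acc => foldr_replicate' _ a (α a) acc
  rw [h1, h2, foldr_flatMap', hstep,
    foldr_shOp α C (List.finRange D) (List.nodup_finRange D) θ]
  have hmem : ∀ k : Fin D, k ∈ List.finRange D := List.mem_finRange
  rw [show (fun k => if k ∈ List.finRange D then Finset.Iic (α k) else ({0} : Finset ℕ))
      = fun k => Finset.Iic (α k) from funext fun k => if_pos (hmem k)]
  rw [← Iic_pi_eq]
  rw [show ((List.finRange D).map α).sum = ∑ k, α k from (Fin.sum_univ_def α).symm]
  apply congrArg
  apply Finset.sum_congr rfl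
  intro j hj
  have harg : (fun k => ((if k ∈ List.finRange D then (α k : ℝ) else 0) - 2 * (j k : ℝ)))
      = fun k => ((α k : ℝ) - 2 * (j k : ℝ)) := funext fun k => by rw [if_pos (hmem k)]
  rw [harg]
  push_cast
  ring
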